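/- Let (X, dist_X) be a metric space equipped with a family 𝒟 = {dist_t : t ∈ [0,∞)} of pseudometrics. Assume: (1) there are positive constants A and m such that for every sufficiently small ε > 0, X admits a covering by at most A·ε^{−m} balls of radius ε for the distance dist_X; and (2) there are constants c, d ≥ 0 and a function φ : [0,∞) → ℝ with φ(t) → 0 as t → ∞ such that dist_t(x,y) ≤ e^{ct+d}·dist_X(x,y) + φ(t) for all t ≥ 0 and all x,y ∈ X. Then the entropy h_𝒟(X) is at most equal to m·c. -/

import Mathlib

open Filter Set MeasureTheory
open scoped ENNReal Topology

variable {X : Type*}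

/-- Minimal number (in `ℕ∞`) of balls of radius `ε` with respect to the
pseudometric `d` (with centers in `X`) needed to cover `Y`. -/
noncomputable def coverNum (d : X → X → ℝ) (Y : Set X) (ε : ℝ) : ℕ∞ :=
  ⨅ (s : Finset X) (_ : Y ⊆ ⋃ x ∈ s, {y | d x y ≤ ε}), (s.card : ℕ∞)

/-- Maximal cardinality (in `ℕ∞`) of an `ε`-separated subset of `Y`
with respect to the pseudometric `d`: a set `F` is `ε`-separated if
`d x y > ε` for all distinct `x, y ∈ F`. -/
noncomputable def sepNum (d : X → X → ℝ) (Y : Set X) (ε : ℝ) : ℕ∞ :=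
  ⨆ (s : Finset X) (_ : (↑s : Set X) ⊆ Y ∧
      ∀ x ∈ s, ∀ y ∈ s, x ≠ y → ε < d x y), (s.card : ℕ∞)

/-- Logarithm of an extended natural number, as an element of `[0, ∞]`. -/
noncomputable def elog (n : ℕ∞) : ℝ≥0∞ :=
  if n = ⊤ then ⊤ else ENNReal.ofReal (Real.log n.toNat)

/-- The entropy of `Y ⊆ X` with respect to the family of pseudometrics
`𝒟 = {d t : t ∈ [0,∞)}` :
`h_𝒟(Y) = sup_{ε>0} limsup_{t→∞} (1/t) log N(Y,t,ε)`. -/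
noncomputable def entropy (d : ℝ → X → X → ℝ) (Y : Set X) : ℝ≥0∞ :=
  ⨆ (ε : ℝ) (_ : 0 < ε),
    Filter.limsup
      (fun t : ℝ => ENNReal.ofReal t⁻¹ * elog (coverNum (d t) Y ε)) atTop

lemma coverNum_anti {d1 d2 : X → X → ℝ} {Y : Set X} {δ ε : ℝ}
    (h : ∀ x y, d1 x y ≤ δ → d2 x y ≤ ε) :
    coverNum d2 Y ε ≤ coverNum d1 Y δ := by
  refine le_iInf₂ fun s hs => iInf₂_le s fun y hy => ?_
  obtain ⟨x, hxs, hxy⟩ := Set.mem_iUnion₂.1 (hs hy)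
  exact Set.mem_iUnion₂.2 ⟨x, hxs, h x y hxy⟩

lemma elog_le_ofReal_log {n : ℕ∞} {R : ℝ} (h : (n : ℝ≥0∞) ≤ ENNReal.ofReal R) :
    elog n ≤ ENNReal.ofReal (Real.log R) := by
  have hn : n ≠ ⊤ := by
    rintro rfl
    rw [ENat.toENNReal_top, top_le_iff] at h
    exact ENNReal.ofReal_ne_top h
  rw [elog, if_neg hn]
  rcases Nat.eq_zero_or_pos n.toNat with h0 | h0
  · simp [h0]
  · have hcast : ((n.toNat : ℕ) : ℝ≥0∞) ≤ ENNReal.ofReal R := by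
      rwa [← ENat.coe_toNat hn] at h
    have hR0 : 0 < R := by
      by_contra hR0
      push_neg at hR0
      rw [ENNReal.ofReal_eq_zero.2 hR0, le_zero_iff] at hcast
      exact h0.ne' (by exact_mod_cast hcast)
    have hR : (n.toNat : ℝ) ≤ R := by
      rw [← ENNReal.ofReal_natCast, ENNReal.ofReal_le_ofReal_iff hR0.le] at hcast
      exact hcast
    exact ENNReal.ofReal_le_ofReal
      (Real.log_le_log (by exact_mod_cast h0) hR)

/-- Let `(X, dist)` be a metric space equipped with a family
`𝒟 = {d t}` of pseudometrics. Assume that there are constants `A, m > 0` such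
that for every small enough `ε > 0` the space `X` can be covered by at most
`A ε^{-m}` balls of radius `ε` for `dist`, and that
`d t ≤ e^{c t + e} dist + φ(t)` with `c, e ≥ 0` and `φ(t) → 0` as `t → ∞`.
Then `h_𝒟(X) ≤ m c`. -/
theorem entropy_le_of_polynomial_cover [MetricSpace X]
    (d : ℝ → X → X → ℝ)
    {A m : ℝ} (hA : 0 < A) (hm : 0 < m)
    (hcover : ∃ ε₀ > 0, ∀ ε : ℝ, 0 < ε → ε < ε₀ →
      ((coverNum (fun x y : X => dist x y) (Set.univ : Set X) ε : ℕ∞) : ℝ≥0∞)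
        ≤ ENNReal.ofReal (A * ε ^ (-m)))
    {c e : ℝ} (hc : 0 ≤ c) (he : 0 ≤ e)
    (φ : ℝ → ℝ) (hφ : Filter.Tendsto φ Filter.atTop (nhds 0))
    (hd : ∀ t : ℝ, 0 ≤ t → ∀ x y : X,
      d t x y ≤ Real.exp (c * t + e) * dist x y + φ t) :
    entropy d (Set.univ : Set X) ≤ ENNReal.ofReal (m * c) := by
  obtain ⟨ε₀, hε₀, hcov⟩ := hcover
  rw [entropy]
  refine iSup₂_le fun ε hε => ?_
  set B : ℝ := e + |Real.log (ε / 2)| + |Real.log (ε₀ / 2)| with hB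
  set K : ℝ := Real.log A + m * B with hK
  have key : ∀ᶠ t in atTop,
      ENNReal.ofReal t⁻¹ * elog (coverNum (d t) (Set.univ : Set X) ε)
        ≤ ENNReal.ofReal (t⁻¹ * K + m * c) := by
    filter_upwards [eventually_gt_atTop (0 : ℝ),
      hφ.eventually_lt_const (show (0:ℝ) < ε / 2 by linarith)] with t ht hφt
    set δ : ℝ := min (ε / 2 * Real.exp (-(c * t + e))) (ε₀ / 2) with hδdef
    have hδ0 : 0 < δ := lt_min (by positivity) (by positivity)
    have hδε₀ : δ < ε₀ := (min_le_right _ _).trans_lt (by linarith)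
    -- Step 1: convert covers
    have step1 : coverNum (d t) (Set.univ : Set X) ε
        ≤ coverNum (fun x y : X => dist x y) (Set.univ : Set X) δ := by
      refine coverNum_anti fun x y hxy => ?_
      have h1 := hd t ht.le x y
      have h2 : Real.exp (c * t + e) * dist x y
          ≤ Real.exp (c * t + e) * (ε / 2 * Real.exp (-(c * t + e))) :=
        mul_le_mul_of_nonneg_left (hxy.trans (min_le_left _ _)) (Real.exp_pos _).le
      have h3 : Real.exp (c * t + e) * (ε / 2 * Real.exp (-(c * t + e))) = ε / 2 := by
        rw [Real.exp_neg]
        field_simp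
      linarith
    have step2 : ((coverNum (d t) (Set.univ : Set X) ε : ℕ∞) : ℝ≥0∞)
        ≤ ENNReal.ofReal (A * δ ^ (-m)) :=
      le_trans (ENat.toENNReal_le.2 step1) (hcov δ hδ0 hδε₀)
    have step3 : elog (coverNum (d t) (Set.univ : Set X) ε)
        ≤ ENNReal.ofReal (Real.log (A * δ ^ (-m))) := elog_le_ofReal_log step2
    -- Step 4: bound the logarithm
    have hlogδ : -Real.log δ ≤ c * t + B := by
      have habs1 := le_abs_self (Real.log (ε / 2))
      have habs1' := neg_abs_le (Real.log (ε / 2))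
      have habs2 := le_abs_self (Real.log (ε₀ / 2))
      have habs2' := neg_abs_le (Real.log (ε₀ / 2))
      have hct : 0 ≤ c * t := mul_nonneg hc ht.le
      rcases min_cases (ε / 2 * Real.exp (-(c * t + e))) (ε₀ / 2) with ⟨h', _⟩ | ⟨h', _⟩ <;>
        rw [hδdef, h']
      · rw [Real.log_mul (by positivity) (Real.exp_pos _).ne', Real.log_exp]
        simp only [hB]; linarith
      · simp only [hB]; linarith
    have step4 : Real.log (A * δ ^ (-m)) ≤ Real.log A + (m * c) * t + m * B := by
      rw [Real.log_mul hA.ne' (by positivity), Real.log_rpow hδ0]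
      nlinarith [mul_le_mul_of_nonneg_left hlogδ hm.le]
    -- combine
    calc ENNReal.ofReal t⁻¹ * elog (coverNum (d t) (Set.univ : Set X) ε)
        ≤ ENNReal.ofReal t⁻¹ * ENNReal.ofReal (Real.log A + (m * c) * t + m * B) :=
          mul_le_mul_right (step3.trans (ENNReal.ofReal_le_ofReal step4)) _
      _ = ENNReal.ofReal (t⁻¹ * (Real.log A + (m * c) * t + m * B)) :=
          (ENNReal.ofReal_mul (by positivity)).symm
      _ = ENNReal.ofReal (t⁻¹ * K + m * c) := by
          congr 1
          field_simp [hK]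
          ring
  have lim : Tendsto (fun t : ℝ => ENNReal.ofReal (t⁻¹ * K + m * c)) atTop
      (nhds (ENNReal.ofReal (m * c))) := by
    have h1 : Tendsto (fun t : ℝ => t⁻¹ * K + m * c) atTop (nhds (0 * K + m * c)) :=
      (tendsto_inv_atTop_zero.mul_const K).add tendsto_const_nhds
    rw [zero_mul, zero_add] at h1
    exact (ENNReal.continuous_ofReal.tendsto (m * c)).comp h1
  exact le_trans (Filter.limsup_le_limsup key) lim.limsup_eq.le
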